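/- Let p be a prime number and let φ : ℂ^{2p−2} → ℂ^{2p−2} be given by φ_j(x', y') = x_j y_j and φ_{p−1+j}(x', y') = x̂_j ŷ_{−j} for 1 ≤ j ≤ p−1, where x = (1, x_1, …, x_{p−1}) and y = (1, y_1, …, y_{p−1}). Then at every zero z of φ (i.e., every z with φ(z) = 0), the complex derivative φ'(z) : ℂ^{2p−2} → ℂ^{2p−2} is invertible (equivalently, the complex Jacobian determinant det φ'(z) is nonzero); in particular every zero of φ is simple. -/

import Mathlib

open scoped BigOperators

/-- The discrete Fourier transform on `ℂ^p`:
`û_j = (1/√p) ∑_{k=0}^{p-1} e^{2πi jk/p} u_k`, indices computed modulo `p`. -/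
noncomputable def dft (p : ℕ) [NeZero p] (u : ZMod p → ℂ) : ZMod p → ℂ := fun j =>
  (1 / (Real.sqrt p : ℂ)) * ∑ k : ZMod p,
    Complex.exp (2 * (Real.pi : ℂ) * Complex.I * (j.val : ℂ) * (k.val : ℂ) / (p : ℂ)) * u k

/-- Extension of `(x_1, …, x_{p-1}) ∈ ℂ^{p-1}` to `x = (1, x_1, …, x_{p-1}) ∈ ℂ^p`. -/
noncomputable def ext (p : ℕ) [NeZero p] (x' : {i : ZMod p // i ≠ 0} → ℂ) : ZMod p → ℂ :=
  fun i => if h : i = 0 then 1 else x' ⟨i, h⟩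

/-- The map `φ : ℂ^{2p-2} → ℂ^{2p-2}`, `φ_j(x',y') = x_j y_j` and
`φ_{p-1+j}(x',y') = x̂_j ŷ_{-j}` for `1 ≤ j ≤ p-1`, where `x = (1, x_1, …, x_{p-1})`
and `y = (1, y_1, …, y_{p-1})`. -/
noncomputable def phi (p : ℕ) [NeZero p] :
    (({i : ZMod p // i ≠ 0} → ℂ) × ({i : ZMod p // i ≠ 0} → ℂ)) →
      (({i : ZMod p // i ≠ 0} → ℂ) × ({i : ZMod p // i ≠ 0} → ℂ)) :=
  fun z => (fun j => z.1 j * z.2 j,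
            fun j => dft p (ext p z.1) (j : ZMod p) * dft p (ext p z.2) (-(j : ZMod p)))

open MvPolynomial Finset

noncomputable section Cheb

variable {n : ℕ}

/-- substitution `X i ↦ X j` -/
def tau (i j : Fin n) : MvPolynomial (Fin n) ℤ →+* MvPolynomial (Fin n) ℤ :=
  (aeval (fun t => if t = i then X j else X t)).toRingHom

@[simp] lemma tau_X (i j t : Fin n) :
    tau i j (X t) = if t = i then X j else X t := by
  simp [tau]

lemma dvd_sub_tau (i j : Fin n) (P : MvPolynomial (Fin n) ℤ) :
    (X i - X j : MvPolynomial (Fin n) ℤ) ∣ (P - tau i j P) := by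
  induction P using MvPolynomial.induction_on with
  | C a => simp [tau]
  | add p q hp hq =>
      have := dvd_add hp hq
      rw [map_add]
      calc (X i - X j : MvPolynomial (Fin n) ℤ) ∣ p - tau i j p + (q - tau i j q) := this
        _ = p + q - (tau i j p + tau i j q) := by ring
  | mul_X p s hp =>
      have h2 : (X i - X j : MvPolynomial (Fin n) ℤ) ∣ (X s - tau i j (X s)) := by
        by_cases hs : s = i
        · subst hs; simp
        · simp [hs]
      have key : p * X s - tau i j (p * X s)
          = (p - tau i j p) * X s + tau i j p * (X s - tau i j (X s)) := by
        rw [map_mul]; ring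
      rw [key]
      exact dvd_add (hp.mul_right _) (h2.mul_left _)

lemma dvd_of_tau_eq_zero {i j : Fin n} {P : MvPolynomial (Fin n) ℤ}
    (h : tau i j P = 0) : (X i - X j : MvPolynomial (Fin n) ℤ) ∣ P := by
  have := dvd_sub_tau i j P
  rwa [h, sub_zero] at this

lemma tau_eq_zero_of_dvd {i j : Fin n} {P : MvPolynomial (Fin n) ℤ}
    (h : (X i - X j : MvPolynomial (Fin n) ℤ) ∣ P) : tau i j P = 0 := by
  obtain ⟨c, rfl⟩ := h
  rw [map_mul, map_sub, tau_X, tau_X, if_pos rfl, ite_self, sub_self, zero_mul]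

lemma X_sub_X_ne_zero {c d : Fin n} (h : c ≠ d) :
    (X c - X d : MvPolynomial (Fin n) ℤ) ≠ 0 := by
  intro hcd
  have := congrArg (MvPolynomial.eval (fun t => if t = c then (1:ℤ) else 0)) hcd
  simp [h, if_neg (Ne.symm h)] at this

lemma X_sub_X_prime {i j : Fin n} (h : i ≠ j) :
    Prime (X i - X j : MvPolynomial (Fin n) ℤ) := by
  constructor
  · exact X_sub_X_ne_zero h
  constructor
  · intro hu
    have : IsUnit (tau i j (X i - X j)) := hu.map _
    rw [map_sub, tau_X, tau_X, if_pos rfl, ite_self, sub_self] at this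
    exact not_isUnit_zero this
  · intro a b hab
    have : tau i j (a * b) = 0 := tau_eq_zero_of_dvd hab
    rw [map_mul] at this
    rcases mul_eq_zero.1 this with h' | h'
    · exact Or.inl (dvd_of_tau_eq_zero h')
    · exact Or.inr (dvd_of_tau_eq_zero h')


lemma prod_primes_dvd' {α : Type*} [CommMonoidWithZero α] {ι : Type*}
    (s : Finset ι) (f : ι → α) (P : α)
    (hprime : ∀ i ∈ s, Prime (f i))
    (hnd : ∀ i ∈ s, ∀ j ∈ s, i ≠ j → ¬ f i ∣ f j)
    (hdvd : ∀ i ∈ s, f i ∣ P) : (∏ i ∈ s, f i) ∣ P := by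
  classical
  induction s using Finset.induction generalizing P with
  | empty => simp
  | @insert a s ha ih =>
      obtain ⟨P₁, rfl⟩ := hdvd a (Finset.mem_insert_self a s)
      rw [Finset.prod_insert ha]
      refine mul_dvd_mul_left _ (ih P₁ (fun i hi => hprime i (Finset.mem_insert_of_mem hi))
        (fun i hi j hj hij => hnd i (Finset.mem_insert_of_mem hi) j (Finset.mem_insert_of_mem hj) hij)
        (fun i hi => ?_))
      have hia : i ≠ a := by rintro rfl; exact ha hi
      have h1 : f i ∣ f a * P₁ := hdvd i (Finset.mem_insert_of_mem hi)
      exact ((hprime i (Finset.mem_insert_of_mem hi)).2.2 _ _ h1).resolve_left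
        (hnd i (Finset.mem_insert_of_mem hi) a (Finset.mem_insert_self a s) hia)

/-- the factors `X j - X i` over pairs `i < j` are pairwise non-dividing primes -/
lemma factor_not_dvd {i j i' j' : Fin n} (hij : i < j) (hij' : i' < j')
    (hne : (i, j) ≠ (i', j')) :
    ¬ (X j' - X i' : MvPolynomial (Fin n) ℤ) ∣ (X j - X i) := by
  intro hdvd
  have h0 : tau i' j' ((X j - X i : MvPolynomial (Fin n) ℤ)) = 0 := by
    apply tau_eq_zero_of_dvd
    have h3 : (X j' - X i' : MvPolynomial (Fin n) ℤ) = -(X i' - X j') := by ring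
    rw [h3, neg_dvd] at hdvd; exact hdvd
  rw [map_sub, tau_X, tau_X] at h0
  by_cases h1 : j = i'
  · by_cases h2 : i = i'
    · exact hij.ne (h2.trans h1.symm)
    · rw [if_pos h1, if_neg h2] at h0
      exact X_sub_X_ne_zero (ne_of_gt (lt_trans (h1 ▸ hij) hij')) h0
  · by_cases h2 : i = i'
    · rw [if_neg h1, if_pos h2] at h0
      have hjj' : j ≠ j' := fun hj => hne (by rw [h2, hj])
      exact X_sub_X_ne_zero hjj' h0
    · rw [if_neg h1, if_neg h2] at h0
      exact X_sub_X_ne_zero hij.ne' h0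


def Vmv (n : ℕ) : MvPolynomial (Fin n) ℤ := ∏ i : Fin n, ∏ j ∈ Finset.Ioi i, (X j - X i)

lemma vandermonde_dvd_det (k : Fin n → ℕ) :
    Vmv n ∣ (Matrix.of fun i j : Fin n => (X i : MvPolynomial (Fin n) ℤ) ^ k j).det := by
  rw [Vmv, ← Finset.prod_sigma (Finset.univ) (fun i => Finset.Ioi i)
    (fun x => (X x.2 - X x.1 : MvPolynomial (Fin n) ℤ))]
  apply prod_primes_dvd'
  · rintro ⟨i, j⟩ hij
    rw [Finset.mem_sigma, Finset.mem_Ioi] at hij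
    exact X_sub_X_prime (ne_of_gt hij.2)
  · rintro ⟨i, j⟩ hij ⟨i', j'⟩ hij' hne
    rw [Finset.mem_sigma, Finset.mem_Ioi] at hij hij'
    refine factor_not_dvd hij'.2 hij.2 ?_
    rintro h
    rw [Prod.mk.injEq] at h
    obtain ⟨h1, h2⟩ := h
    subst h1; subst h2
    exact hne rfl
  · rintro ⟨i, j⟩ hij
    rw [Finset.mem_sigma, Finset.mem_Ioi] at hij
    have hne : i ≠ j := ne_of_lt hij.2
    have h0 : tau i j ((Matrix.of fun i' j' : Fin n =>
        (X i' : MvPolynomial (Fin n) ℤ) ^ k j').det) = 0 := by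
      rw [RingHom.map_det]
      apply Matrix.det_zero_of_row_eq hne
      funext c
      simp [Matrix.map_apply, map_pow, hne]
    have := dvd_of_tau_eq_zero h0
    rwa [show (X i - X j : MvPolynomial (Fin n) ℤ) = -(X j - X i) by ring, neg_dvd] at this


def Gq (m : ℕ) : Polynomial ℤ := ∑ t ∈ Finset.range m, Polynomial.X ^ t

lemma pow_sub_pow_eq {c d : ℕ} (h : d < c) :
    (Polynomial.X : Polynomial ℤ) ^ c - Polynomial.X ^ d
      = (Polynomial.X - 1) * (Polynomial.X ^ d * Gq (c - d)) := by
  have h1 : (Polynomial.X : Polynomial ℤ) ^ c = Polynomial.X ^ (c - d) * Polynomial.X ^ d := by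
    rw [← pow_add, Nat.sub_add_cancel h.le]
  calc (Polynomial.X : Polynomial ℤ) ^ c - Polynomial.X ^ d
      = ((Polynomial.X : Polynomial ℤ) ^ (c - d) - 1) * Polynomial.X ^ d := by rw [h1]; ring
    _ = (Gq (c - d) * (Polynomial.X - 1)) * Polynomial.X ^ d := by rw [Gq, geom_sum_mul]
    _ = (Polynomial.X - 1) * (Polynomial.X ^ d * Gq (c - d)) := by ring

theorem cheb_det_ne_zero (p : ℕ) (hp : p.Prime) {n : ℕ} (a k : Fin n → ℕ)
    (ha : Function.Injective fun i => a i % p) (hk : StrictMono k) (hkp : ∀ j, k j < p) :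
    (Matrix.of fun i j : Fin n =>
      Complex.exp (2 * (Real.pi : ℂ) * Complex.I / p) ^ (a i * k j)).det ≠ 0 := by
  classical
  haveI := Fact.mk hp
  set ζ : ℂ := Complex.exp (2 * (Real.pi : ℂ) * Complex.I / p) with hζdef
  have hprim : IsPrimitiveRoot ζ p := Complex.isPrimitiveRoot_exp p hp.ne_zero
  obtain ⟨Q, hQ⟩ := vandermonde_dvd_det (n := n) k
  -- Step B : integer identity
  set φq : MvPolynomial (Fin n) ℤ →+* Polynomial ℤ :=
    (aeval (fun i : Fin n => Polynomial.X ^ (i : ℕ))).toRingHom with hφq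
  have hdet1 : φq ((Matrix.of fun i j : Fin n => (X i : MvPolynomial (Fin n) ℤ) ^ k j).det)
      = ∏ i : Fin n, ∏ j ∈ Finset.Ioi i,
          ((Polynomial.X : Polynomial ℤ) ^ k j - Polynomial.X ^ k i) := by
    rw [RingHom.map_det]
    have hmat : φq.mapMatrix (Matrix.of fun i j : Fin n => (X i : MvPolynomial (Fin n) ℤ) ^ k j)
        = (Matrix.vandermonde fun j : Fin n => (Polynomial.X : Polynomial ℤ) ^ k j).transpose := by
      ext i j
      simp only [RingHom.mapMatrix_apply, Matrix.map_apply, Matrix.of_apply,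
        Matrix.transpose_apply, Matrix.vandermonde,
        hφq, AlgHom.toRingHom_eq_coe, RingHom.coe_coe, map_pow, aeval_X, Matrix.of_apply]
      rw [← pow_mul, ← pow_mul, mul_comm]
    rw [hmat, Matrix.det_transpose, Matrix.det_vandermonde]
  have hV1 : φq (Vmv n) = ∏ i : Fin n, ∏ j ∈ Finset.Ioi i,
      ((Polynomial.X : Polynomial ℤ) ^ (j : ℕ) - Polynomial.X ^ (i : ℕ)) := by
    simp [Vmv, hφq]
  have hLfac : (∏ i : Fin n, ∏ j ∈ Finset.Ioi i,
        ((Polynomial.X : Polynomial ℤ) ^ k j - Polynomial.X ^ k i))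
      = (∏ i : Fin n, ∏ _j ∈ Finset.Ioi i, (Polynomial.X - 1 : Polynomial ℤ)) *
        ∏ i : Fin n, ∏ j ∈ Finset.Ioi i, ((Polynomial.X : Polynomial ℤ) ^ k i * Gq (k j - k i)) := by
    rw [← Finset.prod_mul_distrib]
    refine Finset.prod_congr rfl fun i _ => ?_
    rw [← Finset.prod_mul_distrib]
    refine Finset.prod_congr rfl fun j hj => ?_
    exact pow_sub_pow_eq (hk (Finset.mem_Ioi.mp hj))
  have hRfac : (∏ i : Fin n, ∏ j ∈ Finset.Ioi i,
        ((Polynomial.X : Polynomial ℤ) ^ (j : ℕ) - Polynomial.X ^ (i : ℕ)))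
      = (∏ i : Fin n, ∏ _j ∈ Finset.Ioi i, (Polynomial.X - 1 : Polynomial ℤ)) *
        ∏ i : Fin n, ∏ j ∈ Finset.Ioi i, ((Polynomial.X : Polynomial ℤ) ^ (i : ℕ) * Gq (j - i)) := by
    rw [← Finset.prod_mul_distrib]
    refine Finset.prod_congr rfl fun i _ => ?_
    rw [← Finset.prod_mul_distrib]
    refine Finset.prod_congr rfl fun j hj => ?_
    exact pow_sub_pow_eq (Fin.lt_def.mp (Finset.mem_Ioi.mp hj))
  have hW : (∏ i : Fin n, ∏ _j ∈ Finset.Ioi i, (Polynomial.X - 1 : Polynomial ℤ)) ≠ 0 := by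
    rw [Finset.prod_ne_zero_iff]
    intro i _
    rw [Finset.prod_ne_zero_iff]
    intro j _
    intro h
    simpa using congrArg (Polynomial.eval 0) h
  have hAB : (∏ i : Fin n, ∏ j ∈ Finset.Ioi i, ((Polynomial.X : Polynomial ℤ) ^ k i * Gq (k j - k i)))
      = (∏ i : Fin n, ∏ j ∈ Finset.Ioi i, ((Polynomial.X : Polynomial ℤ) ^ (i : ℕ) * Gq (j - i)))
        * φq Q := by
    apply mul_left_cancel₀ hW
    rw [← hLfac, ← mul_assoc, ← hRfac, ← hdet1, ← hV1, ← map_mul, hQ]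
  have hZ : (∏ i : Fin n, ∏ j ∈ Finset.Ioi i, ((k j - k i : ℕ) : ℤ))
      = (∏ i : Fin n, ∏ j ∈ Finset.Ioi i, (((j : ℕ) - (i : ℕ) : ℕ) : ℤ))
        * Polynomial.eval 1 (φq Q) := by
    have := congrArg (Polynomial.eval 1) hAB
    simpa [Polynomial.eval_prod, Gq, Polynomial.eval_finset_sum] using this
  have hpZ : Prime ((p : ℤ)) := Nat.prime_iff_prime_int.mp hp
  have hpnot : ¬ ((p : ℤ) ∣ ∏ i : Fin n, ∏ j ∈ Finset.Ioi i, ((k j - k i : ℕ) : ℤ)) := by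
    intro hdvd
    rw [Prime.dvd_finset_prod_iff hpZ] at hdvd
    obtain ⟨i, _, hdvd⟩ := hdvd
    rw [Prime.dvd_finset_prod_iff hpZ] at hdvd
    obtain ⟨j, hj, hdvd⟩ := hdvd
    rw [Int.natCast_dvd_natCast] at hdvd
    have h1 : 0 < k j - k i := Nat.sub_pos_of_lt (hk (Finset.mem_Ioi.mp hj))
    have h2 : k j - k i < p := lt_of_le_of_lt (Nat.sub_le _ _) (hkp j)
    exact absurd (Nat.le_of_dvd h1 hdvd) (not_le.mpr h2)
  have hnotQ : ¬ ((p : ℤ) ∣ Polynomial.eval 1 (φq Q)) := fun h => hpnot (hZ ▸ h.mul_left _)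
  -- Step D
  set ψ : MvPolynomial (Fin n) ℤ →+* Polynomial ℤ :=
    (aeval (fun i : Fin n => Polynomial.X ^ (a i))).toRingHom with hψ
  set χ : Polynomial ℤ →+* ℂ := (Polynomial.aeval ζ : Polynomial ℤ →ₐ[ℤ] ℂ).toRingHom with hχ
  have hdet2 : (χ.comp ψ) ((Matrix.of fun i j : Fin n => (X i : MvPolynomial (Fin n) ℤ) ^ k j).det)
      = (Matrix.of fun i j : Fin n => ζ ^ (a i * k j)).det := by
    rw [RingHom.map_det]
    congr 1
    ext i j
    simp only [RingHom.mapMatrix_apply, Matrix.map_apply, Matrix.of_apply, RingHom.coe_comp,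
      Function.comp_apply, hψ, hχ, AlgHom.toRingHom_eq_coe, RingHom.coe_coe, map_pow, aeval_X,
      Polynomial.aeval_X]
    rw [← pow_mul]
  have hV2 : (χ.comp ψ) (Vmv n) = ∏ i : Fin n, ∏ j ∈ Finset.Ioi i, (ζ ^ a j - ζ ^ a i) := by
    simp [Vmv, hψ, hχ]
  have hVne : (∏ i : Fin n, ∏ j ∈ Finset.Ioi i, (ζ ^ a j - ζ ^ a i)) ≠ 0 := by
    rw [Finset.prod_ne_zero_iff]
    intro i _
    rw [Finset.prod_ne_zero_iff]
    intro j hj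
    rw [sub_ne_zero]
    intro heq
    have hmod : ∀ m : ℕ, ζ ^ m = ζ ^ (m % p) := fun m => by
      conv_lhs => rw [← Nat.mod_add_div m p]
      rw [pow_add, pow_mul, hprim.pow_eq_one, one_pow, mul_one]
    rw [hmod (a j), hmod (a i)] at heq
    have h3 := hprim.pow_inj (Nat.mod_lt _ hp.pos) (Nat.mod_lt _ hp.pos) heq
    exact (Finset.mem_Ioi.mp hj).ne (ha h3).symm
  intro hdet0
  have h4 : (∏ i : Fin n, ∏ j ∈ Finset.Ioi i, (ζ ^ a j - ζ ^ a i)) * (χ.comp ψ) Q = 0 := by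
    rw [← hV2, ← map_mul, ← hQ, hdet2, hdet0]
  have hχQ : Polynomial.aeval ζ (ψ Q) = 0 := by
    rcases mul_eq_zero.mp h4 with h | h
    · exact absurd h hVne
    · exact h
  have hint : IsIntegral ℤ ζ := hprim.isIntegral hp.pos
  have hdvd2 : Polynomial.cyclotomic p ℤ ∣ ψ Q := by
    rw [Polynomial.cyclotomic_eq_minpoly hprim hp.pos]
    exact minpoly.isIntegrallyClosed_dvd hint hχQ
  have hfin : (p : ℤ) ∣ Polynomial.eval 1 (ψ Q) := by
    obtain ⟨c, hc⟩ := hdvd2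
    rw [hc, Polynomial.eval_mul, Polynomial.eval_one_cyclotomic_prime]
    exact dvd_mul_right _ _
  have hsame : Polynomial.eval 1 (ψ Q) = Polynomial.eval 1 (φq Q) := by
    have hcomp : (Polynomial.evalRingHom (1 : ℤ)).comp ψ
        = (Polynomial.evalRingHom (1 : ℤ)).comp φq := by
      apply MvPolynomial.ringHom_ext
      · intro r; simp [hψ, hφq]
      · intro i; simp [hψ, hφq]
    exact RingHom.congr_fun hcomp Q
  exact hnotQ (hsame ▸ hfin)


lemma dft_eq_zeta_sum (p : ℕ) [NeZero p] (u : ZMod p → ℂ) (j : ZMod p) :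
    dft p u j = (1 / (Real.sqrt p : ℂ)) * ∑ k : ZMod p,
      Complex.exp (2 * (Real.pi : ℂ) * Complex.I / p) ^ (j.val * k.val) * u k := by
  rw [dft]
  congr 1
  refine Finset.sum_congr rfl fun kk _ => ?_
  congr 1
  rw [← Complex.exp_nat_mul]
  congr 1
  have hp0 : (p : ℂ) ≠ 0 := by
    exact_mod_cast Nat.cast_ne_zero.mpr (NeZero.ne p)
  push_cast
  field_simp

lemma sqrtp_ne_zero (p : ℕ) [NeZero p] : (Real.sqrt p : ℂ) ≠ 0 := by
  have : (0:ℝ) < Real.sqrt p := Real.sqrt_pos.mpr (by exact_mod_cast Nat.pos_of_ne_zero (NeZero.ne p))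
  exact_mod_cast this.ne'

/-- Tao's uncertainty principle ingredient: a vector supported on `S` whose
Fourier transform vanishes on a set `T` at least as large as `S` is zero. -/
lemma keyK (p : ℕ) (hp : p.Prime) [NeZero p] (w : ZMod p → ℂ) (S T : Finset (ZMod p))
    (hS : ∀ i, i ∉ S → w i = 0) (hT : ∀ t ∈ T, dft p w t = 0)
    (hcard : S.card ≤ T.card) : w = 0 := by
  classical
  obtain ⟨T', hT'sub, hT'card⟩ := Finset.exists_subset_card_eq hcard
  set n := S.card with hn
  set ζ : ℂ := Complex.exp (2 * (Real.pi : ℂ) * Complex.I / p) with hζ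
  set S' : Finset ℕ := S.image ZMod.val with hS'
  have hS'card : S'.card = n := Finset.card_image_of_injective _ (ZMod.val_injective p)
  set eS := S'.orderIsoOfFin hS'card with heS
  have heq : Fin n ≃ {x // x ∈ T'} := (Fintype.equivFinOfCardEq (by rw [Fintype.card_coe, hT'card])).symm
  set eT := heq with heT
  set kf : Fin n → ℕ := fun j => (eS j : ℕ) with hkf
  set af : Fin n → ℕ := fun i => ((eT i : ZMod p)).val with haf
  have hkmono : StrictMono kf := fun i j hij => Subtype.coe_lt_coe.mpr (eS.strictMono hij)
  have hmemS' : ∀ j : Fin n, kf j ∈ S' := fun j => (eS j).2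
  have hkp : ∀ j, kf j < p := by
    intro j
    obtain ⟨s, _, hs⟩ := Finset.mem_image.mp (hmemS' j)
    rw [← hs]
    exact ZMod.val_lt s
  have hainj : Function.Injective fun i => af i % p := by
    intro i j hij
    simp only [haf, Nat.mod_eq_of_lt (ZMod.val_lt _)] at hij
    exact eT.injective (Subtype.ext (ZMod.val_injective p hij))
  have hcastS : ∀ j : Fin n, ((kf j : ZMod p)) ∈ S := by
    intro j
    obtain ⟨s, hsS, hs⟩ := Finset.mem_image.mp (hmemS' j)
    rw [← hs, ZMod.natCast_rightInverse s]
    exact hsS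
  have hdet := cheb_det_ne_zero p hp af kf hainj hkmono hkp
  set M : Matrix (Fin n) (Fin n) ℂ := Matrix.of fun i j => ζ ^ (af i * kf j) with hM
  set c : Fin n → ℂ := fun j => w ((kf j : ZMod p)) with hc
  have hmv : M.mulVec c = 0 := by
    funext i
    set t : ZMod p := (eT i : ZMod p) with ht
    have h0 : dft p w t = 0 := hT t (hT'sub (eT i).2)
    rw [dft_eq_zeta_sum] at h0
    have hsum : ∑ k : ZMod p, ζ ^ (t.val * k.val) * w k = 0 := by
      rcases mul_eq_zero.mp h0 with h | h
      · exact absurd h (by simp [sqrtp_ne_zero p])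
      · exact h
    have hsub : ∑ k ∈ S, ζ ^ (t.val * k.val) * w k = 0 := by
      rw [← hsum]
      apply Finset.sum_subset (Finset.subset_univ S)
      intro k _ hk
      rw [hS k hk, mul_zero]
    have himg : ∑ m ∈ S', ζ ^ (t.val * m) * w ((m : ZMod p)) = 0 := by
      rw [hS', Finset.sum_image (fun x _ y _ h => ZMod.val_injective p h)]
      rw [← hsub]
      refine Finset.sum_congr rfl fun s _ => ?_
      rw [ZMod.natCast_rightInverse s]
    have hfin : ∑ j : Fin n, ζ ^ (t.val * kf j) * w ((kf j : ZMod p)) = 0 := by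
      rw [← himg, ← Finset.sum_coe_sort S' (fun m => ζ ^ (t.val * (m:ℕ)) * w (((m:ℕ) : ZMod p)))]
      exact Fintype.sum_equiv eS.toEquiv _ _ (fun j => rfl)
    simpa [Matrix.mulVec, dotProduct, hM, hc, haf] using hfin
  have hc0 : c = 0 := Matrix.eq_zero_of_mulVec_eq_zero hdet hmv
  funext s
  by_cases hs : s ∈ S
  · have hmem : ZMod.val s ∈ S' := Finset.mem_image_of_mem _ hs
    obtain ⟨j, hj⟩ := eS.surjective ⟨ZMod.val s, hmem⟩
    have h1 : kf j = ZMod.val s := by simp only [hkf]; rw [hj]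
    have h2 : ((kf j : ZMod p)) = s := by rw [h1, ZMod.natCast_rightInverse s]
    have := congrFun hc0 j
    simp only [hc] at this
    simpa [h2] using this
  · exact hS s hs


noncomputable def ext0 (p : ℕ) [NeZero p] (x' : {i : ZMod p // i ≠ 0} → ℂ) : ZMod p → ℂ :=
  fun i => if h : i = 0 then 0 else x' ⟨i, h⟩

section Deriv

variable (p : ℕ) [NeZero p]

local notation "E" => ({i : ZMod p // i ≠ 0} → ℂ)

lemma sum_split (f : ZMod p → ℂ) :
    ∑ k : ZMod p, f k = f 0 + ∑ k : {i : ZMod p // i ≠ 0}, f ↑k := by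
  rw [← Finset.add_sum_erase _ f (Finset.mem_univ 0)]
  congr 1
  exact Finset.sum_subtype _ (fun x => by simp) f

noncomputable def coefc (j : ZMod p) (k : {i : ZMod p // i ≠ 0}) : ℂ :=
  (1 / (Real.sqrt p : ℂ)) *
    Complex.exp (2 * (Real.pi : ℂ) * Complex.I * (j.val : ℂ) * (((k : ZMod p)).val : ℂ) / (p : ℂ))

noncomputable def Wc (j : ZMod p) : E →L[ℂ] ℂ :=
  ∑ k, coefc p j k • ContinuousLinearMap.proj k

lemma Wc_apply (j : ZMod p) (x' : E) :
    Wc p j x' = ∑ k, coefc p j k * x' k := by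
  simp [Wc, ContinuousLinearMap.sum_apply, ContinuousLinearMap.smul_apply,
    ContinuousLinearMap.proj_apply, smul_eq_mul]

lemma ext0_zero (u : E) : ext0 p u 0 = 0 := by simp [ext0]

lemma ext0_coe (u : E) (k : {i : ZMod p // i ≠ 0}) : ext0 p u ↑k = u k := by
  simp [ext0, k.2]

lemma ext_zero' (x' : E) : ext p x' 0 = 1 := by simp [_root_.ext]

lemma ext_coe (x' : E) (k : {i : ZMod p // i ≠ 0}) : ext p x' ↑k = x' k := by
  simp [_root_.ext, k.2]

lemma dft_ext0_eq_W (j : ZMod p) (u : E) :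
    dft p (ext0 p u) j = Wc p j u := by
  unfold dft
  rw [sum_split p (fun k : ZMod p => Complex.exp
    (2 * (Real.pi : ℂ) * Complex.I * (j.val : ℂ) * (k.val : ℂ) / (p : ℂ)) * ext0 p u k)]
  rw [Wc_apply, ext0_zero, mul_zero, zero_add, Finset.mul_sum]
  refine Finset.sum_congr rfl fun k _ => ?_
  rw [ext0_coe, coefc]
  ring

lemma dft_ext_eq_W (j : ZMod p) (x' : E) :
    dft p (ext p x') j = Wc p j x' + dft p (ext p 0) j := by
  unfold dft
  rw [sum_split p (fun k : ZMod p => Complex.exp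
    (2 * (Real.pi : ℂ) * Complex.I * (j.val : ℂ) * (k.val : ℂ) / (p : ℂ)) * ext p x' k)]
  rw [sum_split p (fun k : ZMod p => Complex.exp
    (2 * (Real.pi : ℂ) * Complex.I * (j.val : ℂ) * (k.val : ℂ) / (p : ℂ)) * ext p 0 k)]
  rw [Wc_apply, ext_zero', ext_zero']
  have h4 : ∑ k : {i : ZMod p // i ≠ 0}, Complex.exp
      (2 * (Real.pi : ℂ) * Complex.I * (j.val : ℂ) * (((k : ZMod p)).val : ℂ) / (p : ℂ))
      * ext p (0 : E) ↑k = 0 :=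
    Finset.sum_eq_zero fun k _ => by rw [ext_coe]; simp
  rw [h4, add_zero, mul_add, Finset.mul_sum, add_comm]
  congr 1
  refine Finset.sum_congr rfl fun k _ => ?_
  rw [ext_coe, coefc]
  ring

noncomputable def Dphi (z : E × E) : (E × E) →L[ℂ] (E × E) :=
  (ContinuousLinearMap.pi fun j : {i : ZMod p // i ≠ 0} =>
      z.1 j • ((ContinuousLinearMap.proj j).comp (ContinuousLinearMap.snd ℂ E E))
      + z.2 j • ((ContinuousLinearMap.proj j).comp (ContinuousLinearMap.fst ℂ E E))).prod
  (ContinuousLinearMap.pi fun j : {i : ZMod p // i ≠ 0} =>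
      dft p (ext p z.1) (j : ZMod p) •
        ((Wc p (-(j : ZMod p))).comp (ContinuousLinearMap.snd ℂ E E))
      + dft p (ext p z.2) (-(j : ZMod p)) •
        ((Wc p (j : ZMod p)).comp (ContinuousLinearMap.fst ℂ E E)))

lemma hasFDerivAt_phi (z : E × E) : HasFDerivAt (phi p) (Dphi p z) z := by
  apply HasFDerivAt.prodMk
  · refine hasFDerivAt_pi.mpr fun j => ?_
    have h1 : HasFDerivAt (fun w : E × E => w.1 j)
        ((ContinuousLinearMap.proj j).comp (ContinuousLinearMap.fst ℂ E E)) z :=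
      ((ContinuousLinearMap.proj j).comp (ContinuousLinearMap.fst ℂ E E)).hasFDerivAt
    have h2 : HasFDerivAt (fun w : E × E => w.2 j)
        ((ContinuousLinearMap.proj j).comp (ContinuousLinearMap.snd ℂ E E)) z :=
      ((ContinuousLinearMap.proj j).comp (ContinuousLinearMap.snd ℂ E E)).hasFDerivAt
    exact h1.mul h2
  · refine hasFDerivAt_pi.mpr fun j => ?_
    have hg1 : HasFDerivAt (fun w : E × E => dft p (ext p w.1) (j : ZMod p))
        ((Wc p (j : ZMod p)).comp (ContinuousLinearMap.fst ℂ E E)) z := by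
      have heq : (fun w : E × E => dft p (ext p w.1) (j : ZMod p))
          = fun w => ((Wc p (j : ZMod p)).comp (ContinuousLinearMap.fst ℂ E E)) w
              + dft p (ext p 0) (j : ZMod p) := by
        funext w
        rw [dft_ext_eq_W]
        rfl
      rw [heq]
      exact (((Wc p (j : ZMod p)).comp (ContinuousLinearMap.fst ℂ E E)).hasFDerivAt).add_const _
    have hg2 : HasFDerivAt (fun w : E × E => dft p (ext p w.2) (-(j : ZMod p)))
        ((Wc p (-(j : ZMod p))).comp (ContinuousLinearMap.snd ℂ E E)) z := by
      have heq : (fun w : E × E => dft p (ext p w.2) (-(j : ZMod p)))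
          = fun w => ((Wc p (-(j : ZMod p))).comp (ContinuousLinearMap.snd ℂ E E)) w
              + dft p (ext p 0) (-(j : ZMod p)) := by
        funext w
        rw [dft_ext_eq_W]
        rfl
      rw [heq]
      exact (((Wc p (-(j : ZMod p))).comp
        (ContinuousLinearMap.snd ℂ E E)).hasFDerivAt).add_const _
    exact hg1.mul hg2

end Deriv


section Main

variable (p : ℕ) [NeZero p]

local notation "E" => ({i : ZMod p // i ≠ 0} → ℂ)

/-- Uncertainty: for `w` with `w 0 ≠ 0`, the number of nonzero coordinates of `w` among
nonzero indices bounds the number of zeros of `dft w` among nonzero indices. -/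
lemma uncert (hp : p.Prime) (w : ZMod p → ℂ) (hw : w 0 ≠ 0) :
    (((Finset.univ : Finset (ZMod p)).erase 0).filter fun j => dft p w j = 0).card
      ≤ (((Finset.univ : Finset (ZMod p)).erase 0).filter fun j => w j ≠ 0).card := by
  classical
  by_contra hcon
  push_neg at hcon
  have hxz : w = 0 := by
    refine keyK p hp w
      (insert 0 (((Finset.univ : Finset (ZMod p)).erase 0).filter fun j => w j ≠ 0))
      ((((Finset.univ : Finset (ZMod p)).erase 0)).filter fun j => dft p w j = 0)
      ?_ ?_ ?_
    · intro i hi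
      by_contra hwi
      apply hi
      by_cases h0 : i = 0
      · rw [h0]; exact Finset.mem_insert_self _ _
      · exact Finset.mem_insert_of_mem (Finset.mem_filter.mpr
          ⟨Finset.mem_erase.mpr ⟨h0, Finset.mem_univ i⟩, hwi⟩)
    · intro t ht
      exact (Finset.mem_filter.mp ht).2
    · rw [Finset.card_insert_of_notMem (fun hc => by
        simpa using (Finset.mem_erase.mp (Finset.mem_filter.mp hc).1).1)]
      exact Nat.succ_le_of_lt hcon
  exact hw (by rw [hxz]; rfl)

theorem phi_deriv_bijective_at_zeros' (hp : p.Prime)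
    (z : ({i : ZMod p // i ≠ 0} → ℂ) × ({i : ZMod p // i ≠ 0} → ℂ))
    (hz : phi p z = 0) :
    Function.Bijective (fderiv ℂ (phi p) z) := by
  classical
  have hD := hasFDerivAt_phi p z
  have hf : fderiv ℂ (phi p) z = Dphi p z := hD.fderiv
  rw [hf]
  have hz1 : ∀ k : {i : ZMod p // i ≠ 0}, z.1 k * z.2 k = 0 := by
    intro k
    have := congrFun (congrArg Prod.fst hz) k
    simpa [phi] using this
  have hz2 : ∀ k : {i : ZMod p // i ≠ 0},
      dft p (ext p z.1) (k : ZMod p) * dft p (ext p z.2) (-(k : ZMod p)) = 0 := by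
    intro k
    have := congrFun (congrArg Prod.snd hz) k
    simpa [phi] using this
  have hinj : Function.Injective (Dphi p z) := by
    refine (injective_iff_map_eq_zero _).mpr ?_
    intro w hw
    have heq1 : ∀ k : {i : ZMod p // i ≠ 0},
        z.1 k * w.2 k + z.2 k * w.1 k = 0 := by
      intro k
      have h1 := congrFun (congrArg Prod.fst hw) k
      simpa [Dphi, ContinuousLinearMap.prod_apply, ContinuousLinearMap.pi_apply,
        ContinuousLinearMap.add_apply, ContinuousLinearMap.smul_apply,
        ContinuousLinearMap.comp_apply, ContinuousLinearMap.proj_apply,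
        ContinuousLinearMap.coe_fst', ContinuousLinearMap.coe_snd', smul_eq_mul] using h1
    have heq2 : ∀ k : {i : ZMod p // i ≠ 0},
        dft p (ext p z.1) (k : ZMod p) * dft p (ext0 p w.2) (-(k : ZMod p))
          + dft p (ext p z.2) (-(k : ZMod p)) * dft p (ext0 p w.1) (k : ZMod p) = 0 := by
      intro k
      have h1 := congrFun (congrArg Prod.snd hw) k
      simp only [Dphi, ContinuousLinearMap.prod_apply, ContinuousLinearMap.pi_apply,
        ContinuousLinearMap.add_apply, ContinuousLinearMap.smul_apply,
        ContinuousLinearMap.comp_apply,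
        ContinuousLinearMap.coe_fst', ContinuousLinearMap.coe_snd', smul_eq_mul,
        Prod.snd_zero, Pi.zero_apply] at h1
      rw [← dft_ext0_eq_W, ← dft_ext0_eq_W] at h1
      exact h1
    -- notation
    set x : ZMod p → ℂ := ext p z.1 with hxdef
    set y : ZMod p → ℂ := ext p z.2 with hydef
    set U : ZMod p → ℂ := ext0 p w.1 with hUdef
    set V : ZMod p → ℂ := ext0 p w.2 with hVdef
    have hz1' : ∀ (i : ZMod p) (h : i ≠ 0), x i * y i = 0 := by
      intro i h
      have := hz1 ⟨i, h⟩
      rwa [← ext_coe p z.1 ⟨i, h⟩, ← ext_coe p z.2 ⟨i, h⟩] at this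
    have hz2' : ∀ (i : ZMod p) (h : i ≠ 0), dft p x i * dft p y (-i) = 0 := fun i h => hz2 ⟨i, h⟩
    set E0 : Finset (ZMod p) := (Finset.univ : Finset (ZMod p)).erase 0 with hE0
    have hE0card : E0.card = p - 1 := by
      rw [hE0, Finset.card_erase_of_mem (Finset.mem_univ _), Finset.card_univ, ZMod.card]
    have hcards : ∀ f : ZMod p → ℂ,
        (E0.filter fun j => f j = 0).card + (E0.filter fun j => f j ≠ 0).card = p - 1 := by
      intro f
      rw [← hE0card]
      exact Finset.card_filter_add_card_filter_not (fun j => f j = 0)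
    have hux := uncert p hp x (by rw [hxdef, ext_zero']; exact one_ne_zero)
    have huy := uncert p hp y (by rw [hydef, ext_zero']; exact one_ne_zero)
    rw [← hE0] at hux huy
    -- second coordinate vanishes
    have hV0 : V = 0 := by
      refine keyK p hp V (E0.filter fun j => x j = 0)
        ((E0.filter fun j => dft p x j ≠ 0).image fun j => -j) ?_ ?_ ?_
      · intro i hi
        by_cases h0 : i = 0
        · rw [h0, hVdef]; exact ext0_zero p w.2
        · have hiE : i ∈ E0 := Finset.mem_erase.mpr ⟨h0, Finset.mem_univ i⟩
          have hxne : x i ≠ 0 := fun hxi => hi (Finset.mem_filter.mpr ⟨hiE, hxi⟩)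
          have hyi : y i = 0 := by
            rcases mul_eq_zero.mp (hz1' i h0) with h | h
            · exact absurd h hxne
            · exact h
          have h1 := heq1 ⟨i, h0⟩
          rw [← ext_coe p z.1 ⟨i, h0⟩, ← ext_coe p z.2 ⟨i, h0⟩, ← hxdef, ← hydef, hyi,
            zero_mul, add_zero] at h1
          have hVi : x i * V i = 0 := by
            rw [hVdef, ext0_coe p w.2 ⟨i, h0⟩]
            exact h1
          rcases mul_eq_zero.mp hVi with h | h
          · exact absurd h hxne
          · exact h
      · intro t ht
        obtain ⟨jj, hjj, rfl⟩ := Finset.mem_image.mp ht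
        obtain ⟨hjjE, hjjne⟩ := Finset.mem_filter.mp hjj
        have hjj0 : jj ≠ 0 := (Finset.mem_erase.mp hjjE).1
        have h2 : dft p x jj * dft p V (-jj) + dft p y (-jj) * dft p U jj = 0 := heq2 ⟨jj, hjj0⟩
        have hy2 : dft p y (-jj) = 0 := by
          rcases mul_eq_zero.mp (hz2' jj hjj0) with h | h
          · exact absurd h hjjne
          · exact h
        rw [hy2, zero_mul, add_zero] at h2
        rcases mul_eq_zero.mp h2 with h | h
        · exact absurd h hjjne
        · exact h
      · rw [Finset.card_image_of_injective _ neg_injective]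
        have c1 := hcards x
        have c2 := hcards (dft p x)
        omega
    -- first coordinate vanishes
    have hU0 : U = 0 := by
      refine keyK p hp U (E0.filter fun j => y j = 0)
        ((E0.filter fun j => dft p y j ≠ 0).image fun j => -j) ?_ ?_ ?_
      · intro i hi
        by_cases h0 : i = 0
        · rw [h0, hUdef]; exact ext0_zero p w.1
        · have hiE : i ∈ E0 := Finset.mem_erase.mpr ⟨h0, Finset.mem_univ i⟩
          have hyne : y i ≠ 0 := fun hyi => hi (Finset.mem_filter.mpr ⟨hiE, hyi⟩)
          have hxi : x i = 0 := by
            rcases mul_eq_zero.mp (hz1' i h0) with h | h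
            · exact h
            · exact absurd h hyne
          have h1 := heq1 ⟨i, h0⟩
          rw [← ext_coe p z.1 ⟨i, h0⟩, ← ext_coe p z.2 ⟨i, h0⟩, ← hxdef, ← hydef, hxi,
            zero_mul, zero_add] at h1
          have hUi : y i * U i = 0 := by
            rw [hUdef, ext0_coe p w.1 ⟨i, h0⟩]
            exact h1
          rcases mul_eq_zero.mp hUi with h | h
          · exact absurd h hyne
          · exact h
      · intro t ht
        obtain ⟨m, hm, rfl⟩ := Finset.mem_image.mp ht
        obtain ⟨hmE, hmne⟩ := Finset.mem_filter.mp hm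
        have hm0 : m ≠ 0 := (Finset.mem_erase.mp hmE).1
        have hm0' : -m ≠ 0 := neg_ne_zero.mpr hm0
        have h2 : dft p x (-m) * dft p V (-(-m)) + dft p y (-(-m)) * dft p U (-m) = 0 :=
          heq2 ⟨-m, hm0'⟩
        rw [neg_neg] at h2
        have hx2 : dft p x (-m) = 0 := by
          rcases mul_eq_zero.mp (hz2' (-m) hm0') with h | h
          · exact h
          · rw [neg_neg] at h; exact absurd h hmne
        rw [hx2, zero_mul, zero_add] at h2
        rcases mul_eq_zero.mp h2 with h | h
        · exact absurd h hmne
        · exact h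
      · rw [Finset.card_image_of_injective _ neg_injective]
        have c1 := hcards y
        have c2 := hcards (dft p y)
        omega
    have hw1 : w.1 = 0 := by
      funext k
      have := congrFun hU0 ↑k
      rw [hUdef, ext0_coe p w.1 k] at this
      exact this
    have hw2 : w.2 = 0 := by
      funext k
      have := congrFun hV0 ↑k
      rw [hVdef, ext0_coe p w.2 k] at this
      exact this
    exact Prod.ext hw1 hw2
  refine ⟨hinj, ?_⟩
  have hinj' : Function.Injective ((Dphi p z).toLinearMap) := hinj
  exact LinearMap.injective_iff_surjective.mp hinj'

end Main

end Cheb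

/-- For `p` prime, at every zero `z` of `φ` the complex derivative `φ'(z)` is invertible
(as a linear map `ℂ^{2p-2} → ℂ^{2p-2}`); in particular every zero of `φ` is simple. -/
theorem phi_deriv_bijective_at_zeros (p : ℕ) (hp : p.Prime) [NeZero p]
    (z : ({i : ZMod p // i ≠ 0} → ℂ) × ({i : ZMod p // i ≠ 0} → ℂ))
    (hz : phi p z = 0) :
    Function.Bijective (fderiv ℂ (phi p) z) := by
  exact phi_deriv_bijective_at_zeros' p hp z hz
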